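/- Let (a,b) be a critical point of F with a, b rank-one projections given by unit vectors ã ∈ ℂ^r, b̃ ∈ ℂ^s, and set α_k = ⟨ã, 𝒱* e_k⟩, β_k = ⟨b̃, 𝒲* e_k⟩. Then the Lagrange multipliers λ, μ in the criticality equations S_a(𝒱*Δ𝒱) = λ a, S_b(𝒲*Δ𝒲) = μ b are real, given by λ/2 = ∑_k (|α_k|² − |β_k|²)|α_k|² and μ/2 = ∑_k (|α_k|² − |β_k|²)|β_k|², and satisfy λ − μ = 2 ∑_k (|α_k|² − |β_k|²)² ≥ 0, hence λ ≥ μ. -/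
import Mathlib


open Matrix

lemma sandwich_vecMulVec (n m : ℕ) (V : Matrix (Fin n) (Fin m) ℂ) (v : Fin m → ℂ) :
    V * vecMulVec v (star v) * Vᴴ = vecMulVec (V.mulVec v) (star (V.mulVec v)) := by
  ext i j
  simp only [Matrix.mul_apply, vecMulVec_apply, conjTranspose_apply, mulVec, dotProduct,
    Pi.star_apply, star_sum, star_mul']
  rw [Finset.sum_mul_sum]
  rw [Finset.sum_comm]
  apply Finset.sum_congr rfl; intro l _
  rw [Finset.sum_mul]
  apply Finset.sum_congr rfl; intro k _
  ring

lemma proj_vecMulVec (m : ℕ) (v : Fin m → ℂ) (h : ∑ j, Complex.normSq (v j) = 1) :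
    vecMulVec v (star v) * vecMulVec v (star v) = vecMulVec v (star v) := by
  have h' : ∑ j, (starRingEnd ℂ) (v j) * v j = 1 := by
    have := congrArg (fun x : ℝ => (x : ℂ)) h
    push_cast at this
    simpa [Complex.normSq_eq_conj_mul_self] using this
  ext i j
  simp only [Matrix.mul_apply, vecMulVec_apply, Pi.star_apply]
  calc ∑ k, v i * star (v k) * (v k * star (v j))
      = (v i * star (v j)) * ∑ k, (starRingEnd ℂ) (v k) * v k := by
        rw [Finset.mul_sum]; apply Finset.sum_congr rfl; intro k _
        simp [RCLike.star_def]; ring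
    _ = v i * star (v j) := by rw [h', mul_one]

lemma trace_vecMulVec_diagonal (n : ℕ) (x y d : Fin n → ℂ) :
    trace (vecMulVec x y * diagonal d) = ∑ k, x k * y k * d k := by
  simp [trace, Matrix.mul_diagonal, vecMulVec_apply, Matrix.diag]

lemma trace_vecMulVec_self (m : ℕ) (v : Fin m → ℂ) :
    trace (vecMulVec v (star v)) = ((∑ j, Complex.normSq (v j) : ℝ) : ℂ) := by
  push_cast
  simp [trace, Matrix.diag, vecMulVec_apply, Complex.mul_conj, RCLike.star_def]

lemma trace_sandwich (n m : ℕ) (V : Matrix (Fin n) (Fin m) ℂ) (v : Fin m → ℂ)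
    (d : Fin n → ℂ) :
    trace (vecMulVec v (star v) * (Vᴴ * diagonal d * V)) =
      ∑ k, (Complex.normSq (V.mulVec v k) : ℂ) * d k := by
  have h1 : vecMulVec v (star v) * (Vᴴ * diagonal d * V)
      = (vecMulVec v (star v) * Vᴴ * diagonal d) * V := by
    simp only [Matrix.mul_assoc]
  rw [h1, Matrix.trace_mul_comm]
  have h2 : V * (vecMulVec v (star v) * Vᴴ * diagonal d)
      = (V * vecMulVec v (star v) * Vᴴ) * diagonal d := by
    simp only [Matrix.mul_assoc]
  rw [h2, sandwich_vecMulVec, trace_vecMulVec_diagonal]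
  apply Finset.sum_congr rfl; intro k _
  simp [RCLike.star_def, Complex.mul_conj]

/-- At a critical point of `F` given by rank-one projections `a = av atᴴ`,
`b = bv btᴴ`, the Lagrange multipliers are real, given explicitly by moments of
`α = 𝒱 av`, `β = 𝒲 bv`, and satisfy `λ ≥ μ`. -/
theorem critical_point_multipliers (n r s : ℕ)
    (𝒱 : Matrix (Fin n) (Fin r) ℂ) (𝒲 : Matrix (Fin n) (Fin s) ℂ)
    (h𝒱 : 𝒱ᴴ * 𝒱 = 1) (h𝒲 : 𝒲ᴴ * 𝒲 = 1) (h𝒱𝒲 : 𝒱ᴴ * 𝒲 = 0)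
    (av : Fin r → ℂ) (bv : Fin s → ℂ)
    (hat : ∑ j, Complex.normSq (av j) = 1) (hbt : ∑ j, Complex.normSq (bv j) = 1)
    (a : Matrix (Fin r) (Fin r) ℂ) (b : Matrix (Fin s) (Fin s) ℂ)
    (ha : a = Matrix.vecMulVec av (star av)) (hb : b = Matrix.vecMulVec bv (star bv))
    (Δ : Matrix (Fin n) (Fin n) ℂ)
    (hΔ : Δ = Matrix.diagonal (fun k =>
        (𝒱 * (a * a) * 𝒱ᴴ) k k - (𝒲 * (b * b) * 𝒲ᴴ) k k))
    (lam mu : ℂ)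
    (hcrit₁ : a * (𝒱ᴴ * Δ * 𝒱) + (𝒱ᴴ * Δ * 𝒱) * a = lam • a)
    (hcrit₂ : b * (𝒲ᴴ * Δ * 𝒲) + (𝒲ᴴ * Δ * 𝒲) * b = mu • b)
    (α : Fin n → ℂ) (hα : α = 𝒱.mulVec av)
    (β : Fin n → ℂ) (hβ : β = 𝒲.mulVec bv) :
    lam = ((2 * ∑ k, (Complex.normSq (α k) - Complex.normSq (β k)) *
        Complex.normSq (α k) : ℝ) : ℂ) ∧
    mu = ((2 * ∑ k, (Complex.normSq (α k) - Complex.normSq (β k)) *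
        Complex.normSq (β k) : ℝ) : ℂ) ∧
    lam - mu = ((2 * ∑ k,
        (Complex.normSq (α k) - Complex.normSq (β k)) ^ 2 : ℝ) : ℂ) ∧
    mu.re ≤ lam.re := by
  set dR : Fin n → ℝ := fun k => Complex.normSq (α k) - Complex.normSq (β k) with hdR
  -- a and b are projections
  have haa : a * a = a := by rw [ha]; exact proj_vecMulVec r av hat
  have hbb : b * b = b := by rw [hb]; exact proj_vecMulVec s bv hbt
  -- Δ is the real diagonal matrix with entries dR
  have hΔ' : Δ = Matrix.diagonal (fun k => ((dR k : ℝ) : ℂ)) := by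
    rw [hΔ, haa, hbb, ha, hb, sandwich_vecMulVec, sandwich_vecMulVec, ← hα, ← hβ]
    congr 1
    funext k
    simp only [vecMulVec_apply, Pi.star_apply, RCLike.star_def, Complex.mul_conj, hdR]
    push_cast
    ring
  -- traces of a and b are 1
  have htra : a.trace = 1 := by
    rw [ha, trace_vecMulVec_self, hat]; norm_num
  have htrb : b.trace = 1 := by
    rw [hb, trace_vecMulVec_self, hbt]; norm_num
  -- Lagrange multipliers as traces
  have hlam : lam = 2 * trace (a * (𝒱ᴴ * Δ * 𝒱)) := by
    have h1 := congrArg Matrix.trace hcrit₁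
    rw [Matrix.trace_add, Matrix.trace_smul, htra,
      Matrix.trace_mul_comm (𝒱ᴴ * Δ * 𝒱) a, smul_eq_mul, mul_one] at h1
    rw [two_mul, h1]
  have hmu : mu = 2 * trace (b * (𝒲ᴴ * Δ * 𝒲)) := by
    have h1 := congrArg Matrix.trace hcrit₂
    rw [Matrix.trace_add, Matrix.trace_smul, htrb,
      Matrix.trace_mul_comm (𝒲ᴴ * Δ * 𝒲) b, smul_eq_mul, mul_one] at h1
    rw [two_mul, h1]
  have hlamval : lam = ((2 * ∑ k, dR k * Complex.normSq (α k) : ℝ) : ℂ) := by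
    rw [hlam, ha, hΔ', trace_sandwich, ← hα]
    push_cast
    rw [Finset.mul_sum, Finset.mul_sum]
    exact Finset.sum_congr rfl fun k _ => by ring
  have hmuval : mu = ((2 * ∑ k, dR k * Complex.normSq (β k) : ℝ) : ℂ) := by
    rw [hmu, hb, hΔ', trace_sandwich, ← hβ]
    push_cast
    rw [Finset.mul_sum, Finset.mul_sum]
    exact Finset.sum_congr rfl fun k _ => by ring
  have hdiff : (2 * ∑ k, dR k * Complex.normSq (α k) : ℝ)
      - (2 * ∑ k, dR k * Complex.normSq (β k) : ℝ)
      = (2 * ∑ k, dR k ^ 2 : ℝ) := by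
    rw [← mul_sub, ← Finset.sum_sub_distrib]
    congr 1
    exact Finset.sum_congr rfl fun k _ => by rw [hdR]; ring
  have hsub : lam - mu = ((2 * ∑ k, dR k ^ 2 : ℝ) : ℂ) := by
    rw [hlamval, hmuval, ← Complex.ofReal_sub, hdiff]
  refine ⟨hlamval, hmuval, hsub, ?_⟩
  have h0 : (0 : ℝ) ≤ 2 * ∑ k, dR k ^ 2 := by positivity
  have hre := congrArg Complex.re hsub
  simp only [Complex.sub_re, Complex.ofReal_re] at hre
  linarith
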